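/- Under the deletion rule for U modeled by τ^{1/2}_{+1/2,H} ⊕ τ^{1/2}_{−1/2,V}, among the dinucleotides UC, UU, UG, UA the transitions UC→C and UU→U are allowed horizontally but forbidden vertically, while UG→G and UA→A are allowed in both components; hence U can be (fully) deleted exactly when followed by a purine. -/

import Mathlib

/-- The `q → 0` Wigner–Eckart selection rule for a spinor crystal tensor
operator `τ^{1/2}_m` on one `sl(2)` factor: the transition
`|j₁, m₁⟩ → |j_f, m_f⟩` is allowed iff there is `α ∈ {0,1}` with
`j_f = j₁ + 1/2 − α`, `m_f = m₁ + m`, and `m₁ = j₁ − α` or `−m = 1/2 − α`. -/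
def Allowed (j₁ m₁ jf mf m : ℚ) : Prop :=
  ∃ α : ℚ, (α = 0 ∨ α = 1) ∧ jf = j₁ + 1/2 - α ∧ mf = m₁ + m ∧
    (m₁ = j₁ - α ∨ -m = 1/2 - α)

/-- Modeling the deletion of U by `τ^{1/2}_{+1/2,H} ⊕ τ^{1/2}_{−1/2,V}`:
among UC → C, UU → U, UG → G, UA → A (with UC, UU in (1,1) with
`(J_{H,3}, J_{V,3}) = (0,1), (−1,1)` and UG, UA in (1,0) with `(0,0), (−1,0)`,
the final nucleotides lying in (1/2,1/2) with C = (1/2,1/2), U = (−1/2,1/2),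
G = (1/2,−1/2), A = (−1/2,−1/2)), the transitions UC → C and UU → U are allowed
horizontally but forbidden vertically, while UG → G and UA → A are allowed in
both components: U can be fully deleted exactly when followed by a purine. -/
theorem deletion_of_U_selection_rule :
    -- UC → C : allowed horizontally, forbidden vertically
    (Allowed 1 0 (1/2) (1/2) (1/2)) ∧ (¬ Allowed 1 1 (1/2) (1/2) (-1/2)) ∧
    -- UU → U : allowed horizontally, forbidden vertically
    (Allowed 1 (-1) (1/2) (-1/2) (1/2)) ∧ (¬ Allowed 1 1 (1/2) (1/2) (-1/2)) ∧
    -- UG → G : allowed horizontally and vertically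
    (Allowed 1 0 (1/2) (1/2) (1/2)) ∧ (Allowed 0 0 (1/2) (-1/2) (-1/2)) ∧
    -- UA → A : allowed horizontally and vertically
    (Allowed 1 (-1) (1/2) (-1/2) (1/2)) ∧ (Allowed 0 0 (1/2) (-1/2) (-1/2)) := by
  refine ⟨⟨1, Or.inr rfl, by norm_num, by norm_num, Or.inl (by norm_num)⟩,
    ?_, ⟨1, Or.inr rfl, by norm_num, by norm_num, Or.inr (by norm_num)⟩,
    ?_, ⟨1, Or.inr rfl, by norm_num, by norm_num, Or.inl (by norm_num)⟩,
    ⟨0, Or.inl rfl, by norm_num, by norm_num, Or.inl (by norm_num)⟩,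
    ⟨1, Or.inr rfl, by norm_num, by norm_num, Or.inr (by norm_num)⟩,
    ⟨0, Or.inl rfl, by norm_num, by norm_num, Or.inl (by norm_num)⟩⟩ <;>
  · rintro ⟨α, (rfl|rfl), h1, h2, h3⟩ <;> (revert h1 h2 h3; norm_num)
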